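/- arXiv:2006.07682 — 6 statements merged into one kernel-verified Lean document; each statement's English description precedes it below -/
import Mathlib

section
/- Let f : ℝⁿ → ℝᵈ be L-Lipschitz (with respect to Euclidean norms), and let μ₁, μ₂ ∈ ℝᵈ with μ₁ ≠ μ₂. Suppose x ∈ ℝⁿ satisfies ‖f(x) − μ₁‖ < ‖f(x) − μ₂‖. Then for every δ ∈ ℝⁿ with ‖δ‖ < (‖f(x) − μ₂‖² − ‖f(x) − μ₁‖²) / (2 L ‖μ₂ − μ₁‖), we have ‖f(x+δ) − μ₁‖ < ‖f(x+δ) − μ₂‖. -/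
theorem clustr_robustness_radius
    {n d : ℕ} (f : EuclideanSpace ℝ (Fin n) → EuclideanSpace ℝ (Fin d))
    (L : ℝ) (hf : ∀ x y, ‖f x - f y‖ ≤ L * ‖x - y‖)
    (μ₁ μ₂ : EuclideanSpace ℝ (Fin d)) (hμ : μ₁ ≠ μ₂)
    (x : EuclideanSpace ℝ (Fin n))
    (hx : ‖f x - μ₁‖ < ‖f x - μ₂‖)
    (δ : EuclideanSpace ℝ (Fin n))
    (hδ : ‖δ‖ < (‖f x - μ₂‖ ^ 2 - ‖f x - μ₁‖ ^ 2) / (2 * L * ‖μ₂ - μ₁‖)) :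
    ‖f (x + δ) - μ₁‖ < ‖f (x + δ) - μ₂‖ := by
  set a := f x with ha
  set b := f (x + δ) with hb
  have hnum : 0 < ‖a - μ₂‖ ^ 2 - ‖a - μ₁‖ ^ 2 := by
    have := pow_lt_pow_left₀ hx (norm_nonneg _) two_ne_zero
    linarith
  have hD : 0 < 2 * L * ‖μ₂ - μ₁‖ := by
    by_contra h
    push_neg at h
    have : (‖a - μ₂‖ ^ 2 - ‖a - μ₁‖ ^ 2) / (2 * L * ‖μ₂ - μ₁‖) ≤ 0 :=
      div_nonpos_of_nonneg_of_nonpos (le_of_lt hnum) h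
    have := norm_nonneg δ
    linarith
  have hL : 0 < L := by
    have hμn : 0 < ‖μ₂ - μ₁‖ := by
      rw [norm_pos_iff, sub_ne_zero]; exact fun h => hμ h.symm
    nlinarith
  have hba : ‖b - a‖ ≤ L * ‖δ‖ := by
    have := hf (x + δ) x
    simpa using this
  have key : ‖b - μ₂‖ ^ 2 - ‖b - μ₁‖ ^ 2
      = (‖a - μ₂‖ ^ 2 - ‖a - μ₁‖ ^ 2) + 2 * (inner ℝ (b - a) (μ₁ - μ₂) : ℝ) := by
    simp only [norm_sub_sq_real, inner_sub_left, inner_sub_right]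
    ring
  have hinner : -(‖b - a‖ * ‖μ₁ - μ₂‖) ≤ (inner ℝ (b - a) (μ₁ - μ₂) : ℝ) := by
    have := abs_real_inner_le_norm (b - a) (μ₁ - μ₂)
    cases abs_le.mp this with
    | intro h1 h2 => exact h1
  have hrev : ‖μ₁ - μ₂‖ = ‖μ₂ - μ₁‖ := norm_sub_rev _ _
  have hmul : 2 * L * ‖μ₂ - μ₁‖ * ‖δ‖ < ‖a - μ₂‖ ^ 2 - ‖a - μ₁‖ ^ 2 := by
    have := (lt_div_iff₀ hD).mp hδ
    linarith
  have hμn : 0 ≤ ‖μ₁ - μ₂‖ := norm_nonneg _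
  rw [hrev] at hinner
  have h1 : ‖b - a‖ * ‖μ₂ - μ₁‖ ≤ L * ‖δ‖ * ‖μ₂ - μ₁‖ :=
    mul_le_mul_of_nonneg_right hba (norm_nonneg _)
  have hfin : ‖b - μ₁‖ ^ 2 < ‖b - μ₂‖ ^ 2 := by linarith
  exact lt_of_pow_lt_pow_left₀ 2 (norm_nonneg _) hfin
end

section
/- Let f : ℝⁿ → ℝᵈ be L-Lipschitz with L > 0, and let μ₁ ≠ μ₂ ∈ ℝᵈ. Fix x ∈ ℝⁿ with ‖f(x) − μ₁‖ < ‖f(x) − μ₂‖, and let r = (‖f(x) − μ₂‖² − ‖f(x) − μ₁‖²)/(2L‖μ₂ − μ₁‖). Suppose δ ∈ ℝⁿ satisfies f(x+δ) − f(x) = (L‖δ‖/‖μ₂ − μ₁‖)(μ₂ − μ₁) and ‖δ‖ ≥ r. Then ‖f(x+δ) − μ₂‖ ≤ ‖f(x+δ) − μ₁‖, i.e., x+δ is no longer strictly classified as class 1. -/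
theorem clustr_tightness
    {n d : ℕ} (f : EuclideanSpace ℝ (Fin n) → EuclideanSpace ℝ (Fin d))
    (L : ℝ) (hL : 0 < L) (hf : ∀ x y, ‖f x - f y‖ ≤ L * ‖x - y‖)
    (μ₁ μ₂ : EuclideanSpace ℝ (Fin d)) (hμ : μ₁ ≠ μ₂)
    (x : EuclideanSpace ℝ (Fin n))
    (hx : ‖f x - μ₁‖ < ‖f x - μ₂‖)
    (r : ℝ) (hr : r = (‖f x - μ₂‖ ^ 2 - ‖f x - μ₁‖ ^ 2) / (2 * L * ‖μ₂ - μ₁‖))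
    (δ : EuclideanSpace ℝ (Fin n))
    (hdir : f (x + δ) - f x = (L * ‖δ‖ / ‖μ₂ - μ₁‖) • (μ₂ - μ₁))
    (hδ : r ≤ ‖δ‖) :
    ‖f (x + δ) - μ₂‖ ≤ ‖f (x + δ) - μ₁‖ := by
  have hm0 : μ₂ - μ₁ ≠ 0 := sub_ne_zero.mpr (Ne.symm hμ)
  have hmn : 0 < ‖μ₂ - μ₁‖ := norm_pos_iff.mpr hm0
  set c : ℝ := L * ‖δ‖ / ‖μ₂ - μ₁‖ with hc
  have h1 : f (x + δ) - μ₁ = (f x - μ₁) + c • (μ₂ - μ₁) := by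
    rw [← hdir]; abel
  have h2 : f (x + δ) - μ₂ = (f x - μ₂) + c • (μ₂ - μ₁) := by
    rw [← hdir]; abel
  have e1 : ‖f (x + δ) - μ₁‖ ^ 2 =
      ‖f x - μ₁‖ ^ 2 + 2 * (c * inner ℝ (f x - μ₁) (μ₂ - μ₁)) + c ^ 2 * ‖μ₂ - μ₁‖ ^ 2 := by
    rw [h1, norm_add_sq_real, real_inner_smul_right, norm_smul, mul_pow, Real.norm_eq_abs, sq_abs]
  have e2 : ‖f (x + δ) - μ₂‖ ^ 2 =
      ‖f x - μ₂‖ ^ 2 + 2 * (c * inner ℝ (f x - μ₂) (μ₂ - μ₁)) + c ^ 2 * ‖μ₂ - μ₁‖ ^ 2 := by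
    rw [h2, norm_add_sq_real, real_inner_smul_right, norm_smul, mul_pow, Real.norm_eq_abs, sq_abs]
  have e3 : (inner ℝ (f x - μ₁) (μ₂ - μ₁) : ℝ) - inner ℝ (f x - μ₂) (μ₂ - μ₁) = ‖μ₂ - μ₁‖ ^ 2 := by
    rw [← inner_sub_left, show (f x - μ₁) - (f x - μ₂) = μ₂ - μ₁ by abel,
      real_inner_self_eq_norm_sq]
  have e4 : c * ‖μ₂ - μ₁‖ = L * ‖δ‖ := by
    rw [hc]; field_simp
  have e5 : ‖f x - μ₂‖ ^ 2 - ‖f x - μ₁‖ ^ 2 = r * (2 * L * ‖μ₂ - μ₁‖) := by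
    rw [hr]; field_simp
  have e6 : c * ‖μ₂ - μ₁‖ ^ 2 = L * ‖δ‖ * ‖μ₂ - μ₁‖ := by
    rw [sq, ← mul_assoc, e4]
  have e7 : ‖f (x + δ) - μ₁‖ ^ 2 - ‖f (x + δ) - μ₂‖ ^ 2 =
      ‖f x - μ₁‖ ^ 2 - ‖f x - μ₂‖ ^ 2 + 2 * (L * ‖δ‖ * ‖μ₂ - μ₁‖) := by
    linear_combination e1 - e2 + 2 * c * e3 + 2 * e6
  have key : L * ‖μ₂ - μ₁‖ * r ≤ L * ‖μ₂ - μ₁‖ * ‖δ‖ :=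
    mul_le_mul_of_nonneg_left hδ (le_of_lt (mul_pos hL hmn))
  have hsq : ‖f (x + δ) - μ₂‖ ^ 2 ≤ ‖f (x + δ) - μ₁‖ ^ 2 := by
    nlinarith [e5, e7, key]
  nlinarith [norm_nonneg (f (x + δ) - μ₁), norm_nonneg (f (x + δ) - μ₂)]
end

section
/- Let f : ℝⁿ → ℝᵈ be L-Lipschitz with L > 0, let μ : Fin m → ℝᵈ be centers with class labels c : Fin m → Fin L. Fix x and let i* minimize ‖f(x) − μ i‖ and j* minimize ‖f(x) − μ j‖ over j with c j ≠ c i*; assume ‖f(x) − μ i*‖ < ‖f(x) − μ j*‖ and μ i ≠ μ i* for all i with c i ≠ c i*. If ‖δ‖ < min over j with c j ≠ c i* of (‖f(x) − μ j‖² − ‖f(x) − μ i*‖²)/(2L‖μ j − μ i*‖), then for every j with c j ≠ c i*, ‖f(x+δ) − μ i*‖ < ‖f(x+δ) − μ j‖; hence the nearest center to f(x+δ) has class c i*. -/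
theorem clustr_multiclass_robustness
    {n d m L' : ℕ} (f : EuclideanSpace ℝ (Fin n) → EuclideanSpace ℝ (Fin d))
    (L : ℝ) (hL : 0 < L) (hf : ∀ x y, ‖f x - f y‖ ≤ L * ‖x - y‖)
    (μ : Fin m → EuclideanSpace ℝ (Fin d)) (c : Fin m → Fin L')
    (x : EuclideanSpace ℝ (Fin n)) (istar jstar : Fin m)
    (histar : ∀ i, ‖f x - μ istar‖ ≤ ‖f x - μ i‖)
    (hjc : c jstar ≠ c istar)
    (hjstar : ∀ j, c j ≠ c istar → ‖f x - μ jstar‖ ≤ ‖f x - μ j‖)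
    (hx : ‖f x - μ istar‖ < ‖f x - μ jstar‖)
    (hne : ∀ i, c i ≠ c istar → μ i ≠ μ istar)
    (δ : EuclideanSpace ℝ (Fin n))
    (hδ : ∀ j, c j ≠ c istar →
      ‖δ‖ < (‖f x - μ j‖ ^ 2 - ‖f x - μ istar‖ ^ 2) / (2 * L * ‖μ j - μ istar‖)) :
    ∀ j, c j ≠ c istar → ‖f (x + δ) - μ istar‖ < ‖f (x + δ) - μ j‖ := by
  intro j hj
  set a := f x with ha
  set z := f (x + δ) with hz
  have hμ : μ j ≠ μ istar := hne j hj
  have hden : 0 < ‖μ j - μ istar‖ := by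
    rw [norm_pos_iff, sub_ne_zero]; exact hμ
  have hδj := hδ j hj
  have hgap : 2 * L * ‖μ j - μ istar‖ * ‖δ‖ < ‖a - μ j‖ ^ 2 - ‖a - μ istar‖ ^ 2 := by
    have h2 : 0 < 2 * L * ‖μ j - μ istar‖ := by positivity
    have := mul_lt_mul_of_pos_left hδj h2
    calc 2 * L * ‖μ j - μ istar‖ * ‖δ‖
        < 2 * L * ‖μ j - μ istar‖ *
            ((‖a - μ j‖ ^ 2 - ‖a - μ istar‖ ^ 2) / (2 * L * ‖μ j - μ istar‖)) := this
      _ = ‖a - μ j‖ ^ 2 - ‖a - μ istar‖ ^ 2 := by field_simp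
  have hza : ‖z - a‖ ≤ L * ‖δ‖ := by
    have := hf (x + δ) x
    simpa using this
  have hinner : (inner ℝ (z - a) (μ istar - μ j) : ℝ) - inner ℝ (z - a) (a - μ j)
      + inner ℝ (z - a) (a - μ istar) = 0 := by
    rw [← inner_sub_right, ← inner_add_right]
    have : μ istar - μ j - (a - μ j) + (a - μ istar) = 0 := by abel
    rw [this, inner_zero_right]
  have key : ‖z - μ j‖ ^ 2 - ‖z - μ istar‖ ^ 2
      = ‖a - μ j‖ ^ 2 - ‖a - μ istar‖ ^ 2 + 2 * inner ℝ (z - a) (μ istar - μ j) := by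
    have e1 : z - μ j = (z - a) + (a - μ j) := by abel
    have e2 : z - μ istar = (z - a) + (a - μ istar) := by abel
    rw [e1, e2, norm_add_sq_real, norm_add_sq_real]
    nlinarith [hinner]
  have hib : -(‖z - a‖ * ‖μ j - μ istar‖) ≤ (inner ℝ (z - a) (μ istar - μ j) : ℝ) := by
    have h1 := abs_real_inner_le_norm (z - a) (μ istar - μ j)
    rw [norm_sub_rev (μ istar)] at h1
    have := neg_abs_le (inner ℝ (z - a) (μ istar - μ j) : ℝ)
    linarith
  have hmul : ‖z - a‖ * ‖μ j - μ istar‖ ≤ L * ‖δ‖ * ‖μ j - μ istar‖ :=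
    mul_le_mul_of_nonneg_right hza hden.le
  have hsq : ‖z - μ istar‖ ^ 2 < ‖z - μ j‖ ^ 2 := by nlinarith
  nlinarith [norm_nonneg (z - μ j), norm_nonneg (z - μ istar)]
end

section
/- Let f : ℝⁿ → ℝᵈ be L-Lipschitz (L > 0) and μ₁ ≠ μ₂ ∈ ℝᵈ. Define the classifier g(x) = 1 if ‖f(x) − μ₁‖ < ‖f(x) − μ₂‖ and g(x) = 2 otherwise. If g(x) = 1 and g(x+δ) = 2, then ‖δ‖ ≥ (‖f(x) − μ₂‖² − ‖f(x) − μ₁‖²)/(2L‖μ₂ − μ₁‖). -/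
open scoped RealInnerProductSpace


theorem clustr_adversarial_norm_lower_bound
    {n d : ℕ} (f : EuclideanSpace ℝ (Fin n) → EuclideanSpace ℝ (Fin d))
    (L : ℝ) (hL : 0 < L) (hf : ∀ x y, ‖f x - f y‖ ≤ L * ‖x - y‖)
    (μ₁ μ₂ : EuclideanSpace ℝ (Fin d)) (hμ : μ₁ ≠ μ₂)
    (g : EuclideanSpace ℝ (Fin n) → Fin 2)
    (hg : ∀ y, g y = if ‖f y - μ₁‖ < ‖f y - μ₂‖ then 0 else 1)
    (x δ : EuclideanSpace ℝ (Fin n))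
    (hx : g x = 0) (hadv : g (x + δ) = 1) :
    ‖δ‖ ≥ (‖f x - μ₂‖ ^ 2 - ‖f x - μ₁‖ ^ 2) / (2 * L * ‖μ₂ - μ₁‖) := by
  set a := f x with ha
  set b := f (x + δ) with hb
  have h1 : ‖a - μ₁‖ < ‖a - μ₂‖ := by
    by_contra h
    rw [hg x, if_neg h] at hx
    exact one_ne_zero hx
  have h2 : ¬ ‖b - μ₁‖ < ‖b - μ₂‖ := by
    intro h
    rw [hg (x + δ), if_pos h] at hadv
    exact zero_ne_one hadv
  push_neg at h2
  have hkey : ‖a - μ₂‖ ^ 2 - ‖a - μ₁‖ ^ 2 - (‖b - μ₂‖ ^ 2 - ‖b - μ₁‖ ^ 2)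
      = 2 * ⟪a - b, μ₁ - μ₂⟫ := by
    simp only [norm_sub_sq_real, inner_sub_left, inner_sub_right]
    ring
  have hinner : ⟪a - b, μ₁ - μ₂⟫ ≤ ‖a - b‖ * ‖μ₂ - μ₁‖ := by
    calc ⟪a - b, μ₁ - μ₂⟫ ≤ ‖a - b‖ * ‖μ₁ - μ₂‖ := real_inner_le_norm _ _
    _ = ‖a - b‖ * ‖μ₂ - μ₁‖ := by rw [norm_sub_rev μ₁ μ₂]
  have hab : ‖a - b‖ ≤ L * ‖δ‖ := by
    have := hf x (x + δ)
    simpa [norm_sub_rev] using this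
  have hμpos : 0 < ‖μ₂ - μ₁‖ := by
    rw [norm_pos_iff, sub_ne_zero]
    exact fun h => hμ h.symm
  have hden : 0 < 2 * L * ‖μ₂ - μ₁‖ := by positivity
  rw [ge_iff_le, div_le_iff₀ hden]
  nlinarith [mul_le_mul_of_nonneg_right hab (le_of_lt hμpos),
    pow_le_pow_left₀ (norm_nonneg (b - μ₂)) h2 2]
end

section
/- Let f : ℝⁿ → ℝᵈ be L-Lipschitz, μ₁ ≠ μ₂ ∈ ℝᵈ, and suppose x satisfies ‖f(x) − μ₁‖ < ‖f(x) − μ₂‖. Let r = (‖f(x) − μ₂‖² − ‖f(x) − μ₁‖²)/(2L‖μ₂ − μ₁‖). Then for any δ with ‖δ‖ < r, the perturbed point satisfies the strict quantitative margin: ‖f(x+δ) − μ₂‖² − ‖f(x+δ) − μ₁‖² ≥ 2L‖μ₂ − μ₁‖ (r − ‖δ‖) > 0. -/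
open scoped RealInnerProductSpace


theorem clustr_quantitative_margin
    {n d : ℕ} (f : EuclideanSpace ℝ (Fin n) → EuclideanSpace ℝ (Fin d))
    (L : ℝ) (hL : 0 < L) (hf : ∀ x y, ‖f x - f y‖ ≤ L * ‖x - y‖)
    (μ₁ μ₂ : EuclideanSpace ℝ (Fin d)) (hμ : μ₁ ≠ μ₂)
    (x : EuclideanSpace ℝ (Fin n))
    (hx : ‖f x - μ₁‖ < ‖f x - μ₂‖)
    (r : ℝ) (hr : r = (‖f x - μ₂‖ ^ 2 - ‖f x - μ₁‖ ^ 2) / (2 * L * ‖μ₂ - μ₁‖))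
    (δ : EuclideanSpace ℝ (Fin n)) (hδ : ‖δ‖ < r) :
    ‖f (x + δ) - μ₂‖ ^ 2 - ‖f (x + δ) - μ₁‖ ^ 2 ≥ 2 * L * ‖μ₂ - μ₁‖ * (r - ‖δ‖) ∧
    2 * L * ‖μ₂ - μ₁‖ * (r - ‖δ‖) > 0 := by
  have hμn : 0 < ‖μ₂ - μ₁‖ := by
    rw [norm_pos_iff, sub_ne_zero]; exact fun h => hμ h.symm
  have hden : 2 * L * ‖μ₂ - μ₁‖ > 0 := by positivity
  have hrr : 2 * L * ‖μ₂ - μ₁‖ * r = ‖f x - μ₂‖ ^ 2 - ‖f x - μ₁‖ ^ 2 := by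
    rw [hr]; field_simp
  set y := f (x + δ)
  set z := f x
  have hlip : ‖y - z‖ ≤ L * ‖δ‖ := by
    have := hf (x + δ) x
    simpa using this
  have hcs := abs_real_inner_le_norm (y - z) (μ₁ - μ₂)
  have hnn : ‖μ₁ - μ₂‖ = ‖μ₂ - μ₁‖ := norm_sub_rev _ _
  have key : ‖y - μ₂‖ ^ 2 - ‖y - μ₁‖ ^ 2
      = ‖z - μ₂‖ ^ 2 - ‖z - μ₁‖ ^ 2 + 2 * (inner ℝ (y - z) (μ₁ - μ₂) : ℝ) := by
    rw [norm_sub_sq_real y μ₂, norm_sub_sq_real y μ₁, norm_sub_sq_real z μ₂,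
      norm_sub_sq_real z μ₁, inner_sub_left, inner_sub_right, inner_sub_right]
    ring
  rw [hnn] at hcs
  have habs := abs_le.mp hcs
  have h1 : ‖y - z‖ * ‖μ₂ - μ₁‖ ≤ L * ‖δ‖ * ‖μ₂ - μ₁‖ :=
    mul_le_mul_of_nonneg_right hlip (norm_nonneg _)
  have h2 : (inner ℝ (y - z) (μ₁ - μ₂) : ℝ) ≥ -(L * ‖δ‖ * ‖μ₂ - μ₁‖) := by
    linarith [habs.1]
  constructor
  · nlinarith [key, hrr, h2]
  · nlinarith
end

section
/- Let a ∈ ℝᵈ, σ > 0, and centers μ : Fin m → ℝᵈ partitioned into classes by c : Fin m → Fin L. Define class probability P_v = (Σ_{j : c j = v} exp(−‖a − μ j‖²/(2σ²))) / (Σⱼ exp(−‖a − μ j‖²/(2σ²))). If there is an index i with c i = v such that ‖a − μ i‖² + 2σ² log m < ‖a − μ j‖² for every j with c j ≠ v, then P_v > 1/2. -/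
open Real

theorem clustr_magnet_inference_margin
    {d m L : ℕ} (hm : 0 < m) (a : EuclideanSpace ℝ (Fin d)) (σ : ℝ) (hσ : 0 < σ)
    (μ : Fin m → EuclideanSpace ℝ (Fin d)) (c : Fin m → Fin L) (v : Fin L)
    (i : Fin m) (hi : c i = v)
    (hmargin : ∀ j, c j ≠ v →
      ‖a - μ i‖ ^ 2 + 2 * σ ^ 2 * Real.log m < ‖a - μ j‖ ^ 2) :
    (∑ j ∈ Finset.univ.filter (fun j => c j = v),
        exp (-‖a - μ j‖ ^ 2 / (2 * σ ^ 2))) /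
      (∑ j, exp (-‖a - μ j‖ ^ 2 / (2 * σ ^ 2))) > 1 / 2 := by
  set f : Fin m → ℝ := fun j => exp (-‖a - μ j‖ ^ 2 / (2 * σ ^ 2)) with hf
  have hσ2 : (0:ℝ) < 2 * σ ^ 2 := by positivity
  set S := Finset.univ.filter (fun j => c j = v) with hS
  have hiS : i ∈ S := by simp [hS, hi]
  have hfpos : ∀ j, 0 < f j := fun j => exp_pos _
  -- sum over complement is bounded
  have hEi : f i ≤ ∑ j ∈ S, f j :=
    Finset.single_le_sum (fun j _ => (hfpos j).le) hiS
  have hcomp : ∑ j ∈ Finset.univ.filter (fun j => c j ≠ v), f j < ∑ j ∈ S, f j := by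
    have hbound : ∀ j ∈ Finset.univ.filter (fun j => c j ≠ v), f j ≤ f i / m := by
      intro j hj
      simp only [Finset.mem_filter] at hj
      have h := hmargin j hj.2
      have : -‖a - μ j‖ ^ 2 / (2 * σ ^ 2) ≤
          -‖a - μ i‖ ^ 2 / (2 * σ ^ 2) - Real.log m := by
        rw [div_sub' hσ2.ne', div_le_div_iff_of_pos_right hσ2]
        nlinarith
      calc f j ≤ exp (-‖a - μ i‖ ^ 2 / (2 * σ ^ 2) - Real.log m) := exp_le_exp.2 this
        _ = f i / m := by
            rw [exp_sub, exp_log (by exact_mod_cast hm)]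
    calc ∑ j ∈ Finset.univ.filter (fun j => c j ≠ v), f j
        ≤ ∑ _j ∈ Finset.univ.filter (fun j => c j ≠ v), f i / m :=
          Finset.sum_le_sum hbound
      _ = (Finset.univ.filter (fun j => c j ≠ v)).card * (f i / m) := by
          rw [Finset.sum_const, nsmul_eq_mul]
      _ < f i := by
          have hcard : ((Finset.univ.filter (fun j => c j ≠ v)).card : ℝ) < m := by
            have : (Finset.univ.filter (fun j => c j ≠ v)).card < m := by
              have := Finset.card_filter_le (Finset.univ : Finset (Fin m))
                (fun j => c j ≠ v)
              rcases lt_or_eq_of_le (this.trans_eq (Finset.card_univ)) with h | h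
              · simpa using h
              · exfalso
                have : i ∈ Finset.univ.filter (fun j => c j ≠ v) := by
                  have := Finset.eq_univ_of_card (Finset.univ.filter (fun j => c j ≠ v)) (by simpa using h)
                  rw [this]; exact Finset.mem_univ i
                simp [hi] at this
            exact_mod_cast this
          have hfi : 0 < f i := hfpos i
          calc ((Finset.univ.filter (fun j => c j ≠ v)).card : ℝ) * (f i / m)
              < m * (f i / m) := by
                apply mul_lt_mul_of_pos_right hcard
                positivity
            _ = f i := by field_simp
      _ ≤ ∑ j ∈ S, f j := hEi
  have hsplit : ∑ j, f j = (∑ j ∈ S, f j) + ∑ j ∈ Finset.univ.filter (fun j => c j ≠ v), f j := by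
    rw [← Finset.sum_filter_add_sum_filter_not Finset.univ (fun j => c j = v) f]
  have hT : 0 < ∑ j, f j :=
    Finset.sum_pos (fun j _ => hfpos j) (Finset.univ_nonempty_iff.2 ⟨i⟩)
  rw [gt_iff_lt, div_lt_div_iff₀ (by norm_num) hT, hsplit]
  linarith
end
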